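/- Let G be a group with trivial center, σ1, σ2, σ3 ∈ G with σ1⁴ = σ2⁴ = 1, σ1σ2σ3 = 1, and G generated by σ1⁻²σ3σ1², σ1⁻¹σ3σ1, σ3. Then v = (σ1⁻²σ3σ1², σ1⁻¹σ3σ1, σ3, σ1⁻³σ3σ1³) is a generating 4-system of G, all of whose entries are conjugate to σ3, and the cyclic shift (σ1⁻¹σ3σ1, σ3, σ1⁻³σ3σ1³, σ1⁻²σ3σ1²) of v is simultaneously conjugate to v. -/

import Mathlib

namespace Braid

variable {G : Type*} [Group G]

/-- Simultaneous conjugacy of 4-tuples: some `γ` conjugates each entry of the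
first tuple to the corresponding entry of the second. -/
def SimConj4 (σ τ : G × G × G × G) : Prop :=
  ∃ γ : G, γ⁻¹ * σ.1 * γ = τ.1 ∧ γ⁻¹ * σ.2.1 * γ = τ.2.1 ∧
    γ⁻¹ * σ.2.2.1 * γ = τ.2.2.1 ∧ γ⁻¹ * σ.2.2.2 * γ = τ.2.2.2

/-- The braid move β₂. -/
def b2 (σ : G × G × G × G) : G × G × G × G :=
  (σ.1 * σ.2.1 * σ.1⁻¹, σ.1, σ.2.2.1, σ.2.2.2)

/-- The braid move β₃. -/
def b3 (σ : G × G × G × G) : G × G × G × G :=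
  (σ.1, σ.2.1 * σ.2.2.1 * σ.2.1⁻¹, σ.2.1, σ.2.2.2)

/-- The braid move β₄. -/
def b4 (σ : G × G × G × G) : G × G × G × G :=
  (σ.1, σ.2.1, σ.2.2.1 * σ.2.2.2 * σ.2.2.1⁻¹, σ.2.2.1)

/-- The inverse braid move β₂⁻¹. -/
def b2i (σ : G × G × G × G) : G × G × G × G :=
  (σ.2.1, σ.2.1⁻¹ * σ.1 * σ.2.1, σ.2.2.1, σ.2.2.2)

/-- The inverse braid move β₃⁻¹. -/
def b3i (σ : G × G × G × G) : G × G × G × G :=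
  (σ.1, σ.2.2.1, σ.2.2.1⁻¹ * σ.2.1 * σ.2.2.1, σ.2.2.2)

/-- The inverse braid move β₄⁻¹. -/
def b4i (σ : G × G × G × G) : G × G × G × G :=
  (σ.1, σ.2.1, σ.2.2.2, σ.2.2.2⁻¹ * σ.2.2.1 * σ.2.2.2)

/-- β₁₂ = β₂² (composites applied left to right). -/
def b12 : G × G × G × G → G × G × G × G := b2 ∘ b2

/-- β₁₃ = β₂⁻¹β₃²β₂ (apply β₂⁻¹, then β₃ twice, then β₂). -/
def b13 : G × G × G × G → G × G × G × G := b2 ∘ b3 ∘ b3 ∘ b2i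

/-- β₁₄ = β₂⁻¹β₃⁻¹β₄²β₃β₂. -/
def b14 : G × G × G × G → G × G × G × G := b2 ∘ b3 ∘ b4 ∘ b4 ∘ b3i ∘ b2i

/-- β₂₃ = β₃². -/
def b23 : G × G × G × G → G × G × G × G := b3 ∘ b3

/-- β₂₄ = β₃⁻¹β₄²β₃. -/
def b24 : G × G × G × G → G × G × G × G := b3 ∘ b4 ∘ b4 ∘ b3i

/-- β₃₄ = β₄². -/
def b34 : G × G × G × G → G × G × G × G := b4 ∘ b4

/-- β₁₂⁻¹ = β₂⁻². -/
def b12inv : G × G × G × G → G × G × G × G := b2i ∘ b2i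

/-- β₁₄⁻¹ = β₂⁻¹β₃⁻¹β₄⁻²β₃β₂. -/
def b14inv : G × G × G × G → G × G × G × G := b2 ∘ b3 ∘ b4i ∘ b4i ∘ b3i ∘ b2i

/-- φ₄,₁ = β₂β₄⁻¹ (apply β₂, then β₄⁻¹). -/
def phi41 : G × G × G × G → G × G × G × G := b4i ∘ b2

/-- φ₄,₂ = (β₂β₃β₄)². -/
def phi42 : G × G × G × G → G × G × G × G := b4 ∘ b3 ∘ b2 ∘ b4 ∘ b3 ∘ b2

/-- A generating 4-system of `G`: product of the entries is 1 and the entries generate `G`. -/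
def IsGenSys4 (σ : G × G × G × G) : Prop :=
  σ.1 * σ.2.1 * σ.2.2.1 * σ.2.2.2 = 1 ∧
    Subgroup.closure {σ.1, σ.2.1, σ.2.2.1, σ.2.2.2} = ⊤

end Braid

open Braid in
/-- Proposition (fixed points of α₄,₀): for `G` centerless with `σ₁⁴ = σ₂⁴ = 1`,
`σ₁σ₂σ₃ = 1` and `G = ⟨σ₁⁻²σ₃σ₁², σ₁⁻¹σ₃σ₁, σ₃⟩`, the tuple
`v = (σ₁⁻²σ₃σ₁², σ₁⁻¹σ₃σ₁, σ₃, σ₁⁻³σ₃σ₁³)` is a generating 4-system, all of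
whose entries are conjugate to `σ₃`, and its cyclic shift is simultaneously
conjugate to `v`. -/
theorem statement14 {G : Type*} [Group G] (hZ : Subgroup.center G = ⊥)
    (σ1 σ2 σ3 : G) (h1 : σ1 ^ 4 = 1) (h2 : σ2 ^ 4 = 1)
    (hrel : σ1 * σ2 * σ3 = 1)
    (hgen : Subgroup.closure
      {(σ1 ^ 2)⁻¹ * σ3 * σ1 ^ 2, σ1⁻¹ * σ3 * σ1, σ3} = ⊤) :
    IsGenSys4 ((σ1 ^ 2)⁻¹ * σ3 * σ1 ^ 2, σ1⁻¹ * σ3 * σ1, σ3,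
      (σ1 ^ 3)⁻¹ * σ3 * σ1 ^ 3) ∧
    IsConj σ3 ((σ1 ^ 2)⁻¹ * σ3 * σ1 ^ 2) ∧
    IsConj σ3 (σ1⁻¹ * σ3 * σ1) ∧
    IsConj σ3 σ3 ∧
    IsConj σ3 ((σ1 ^ 3)⁻¹ * σ3 * σ1 ^ 3) ∧
    SimConj4
      (σ1⁻¹ * σ3 * σ1, σ3, (σ1 ^ 3)⁻¹ * σ3 * σ1 ^ 3, (σ1 ^ 2)⁻¹ * σ3 * σ1 ^ 2)
      ((σ1 ^ 2)⁻¹ * σ3 * σ1 ^ 2, σ1⁻¹ * σ3 * σ1, σ3,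
        (σ1 ^ 3)⁻¹ * σ3 * σ1 ^ 3) := by
  have h3 : σ3 = (σ1 * σ2)⁻¹ := eq_inv_of_mul_eq_one_right hrel
  have e2 : σ3 * σ1 = σ2⁻¹ := by rw [h3]; group
  have hq : σ3 * σ1 * (σ3 * σ1) * (σ3 * σ1) * (σ3 * σ1) = 1 := by
    rw [e2]
    calc σ2⁻¹ * σ2⁻¹ * σ2⁻¹ * σ2⁻¹ = (σ2 ^ 4)⁻¹ := by group
      _ = 1 := by rw [h2, inv_one]
  have e1 : σ1 ^ 3 = σ1⁻¹ := by
    have h4 : σ1 ^ 3 * σ1 = 1 := by rw [← pow_succ]; exact h1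
    exact eq_inv_of_mul_eq_one_left h4
  refine ⟨⟨?_, ?_⟩, ?_, ?_, IsConj.refl _, ?_, ?_⟩
  · show (σ1 ^ 2)⁻¹ * σ3 * σ1 ^ 2 * (σ1⁻¹ * σ3 * σ1) * σ3 * ((σ1 ^ 3)⁻¹ * σ3 * σ1 ^ 3) = 1
    rw [e1]
    calc (σ1 ^ 2)⁻¹ * σ3 * σ1 ^ 2 * (σ1⁻¹ * σ3 * σ1) * σ3 * (σ1⁻¹⁻¹ * σ3 * σ1⁻¹)
        = (σ1 ^ 2)⁻¹ * (σ3 * σ1 * (σ3 * σ1) * (σ3 * σ1) * (σ3 * σ1)) * (σ1 ^ 2)⁻¹ := by group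
      _ = (σ1 ^ 2)⁻¹ * 1 * (σ1 ^ 2)⁻¹ := by rw [hq]
      _ = (σ1 ^ 4)⁻¹ := by group
      _ = 1 := by rw [h1, inv_one]
  · refine top_unique ?_
    rw [← hgen]
    refine Subgroup.closure_mono ?_
    intro x hx
    simp only [Set.mem_insert_iff, Set.mem_singleton_iff] at hx ⊢
    tauto
  · exact isConj_iff.2 ⟨(σ1 ^ 2)⁻¹, by group⟩
  · exact isConj_iff.2 ⟨σ1⁻¹, by group⟩
  · exact isConj_iff.2 ⟨(σ1 ^ 3)⁻¹, by group⟩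
  · refine ⟨σ1, by simp only [pow_succ, pow_zero, one_mul]; group,
      rfl, ?_,
      by simp only [pow_succ, pow_zero, one_mul]; group⟩
    show σ1⁻¹ * ((σ1 ^ 3)⁻¹ * σ3 * σ1 ^ 3) * σ1 = σ3
    rw [e1]
    group
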